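/- Let V be a self-orthogonal F_q-subspace of F_q^{2n}, i.e., ⟨v, Jv'⟩ = 0 for all v, v' ∈ V. Then there exists a function c : V → ℂ with c(0) = 1 such that, writing W(v) := c(v)·W̃(v), one has W(v) W(v') = W(v + v') for all v, v' ∈ V; consequently {W(v) : v ∈ V} is a commutative group of q^n × q^n matrices under matrix multiplication in which the identity matrix is the only scalar multiple of the identity. -/

import Mathlib

/-- `ω = exp(2πi/p)`, a primitive `p`-th root of unity. -/
noncomputable def omg (p : ℕ) : ℂ := Complex.exp (2 * (Real.pi : ℂ) * Complex.I / (p : ℂ))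

/-- The `F_p`-valued pairing `⟨x, y⟩ = tr(∑ s, x s * y s)` on `F_q^n`, where
`tr : F_q → F_p` is the field trace. -/
noncomputable def ip (p : ℕ) {K : Type*} [Field K] [Fintype K] [Algebra (ZMod p) K]
    {n : ℕ} (x y : Fin n → K) : ZMod p :=
  Algebra.trace (ZMod p) K (∑ s, x s * y s)

/-- The Weyl operator `W̃(a,b)`: the `q^n × q^n` complex matrix, with rows and columns
indexed by `F_q^n`, whose `(j,k)` entry is `ω^{⟨b,k⟩}` if `j = k + a` and `0`
otherwise. -/
noncomputable def Wt (p : ℕ) {K : Type*} [Field K] [Fintype K] [DecidableEq K]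
    [Algebra (ZMod p) K] {n : ℕ} (a b : Fin n → K) :
    Matrix (Fin n → K) (Fin n → K) ℂ :=
  Matrix.of fun j k => if j = k + a then omg p ^ (ip p b k).val else 0

/-- The Weyl operator `W̃(v)` of a vector `v = (a,b) ∈ F_q^{2n} = F_q^n × F_q^n`. -/
noncomputable def Wtv (p : ℕ) {K : Type*} [Field K] [Fintype K] [DecidableEq K]
    [Algebra (ZMod p) K] {n : ℕ} (v : (Fin n → K) × (Fin n → K)) :
    Matrix (Fin n → K) (Fin n → K) ℂ :=
  Wt p v.1 v.2

/-- The symplectic pairing `⟨v, Jw⟩ = ⟨v.2, w.1⟩ − ⟨v.1, w.2⟩ ∈ F_p` on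
`F_q^{2n} = F_q^n × F_q^n`, where `J = [[0, −I_n],[I_n, 0]]`. -/
noncomputable def symp (p : ℕ) {K : Type*} [Field K] [Fintype K] [Algebra (ZMod p) K]
    {n : ℕ} (v w : (Fin n → K) × (Fin n → K)) : ZMod p :=
  ip p v.2 w.1 - ip p v.1 w.2

set_option linter.unusedSectionVars false
set_option linter.unusedTactic false

/-! ### Auxiliary arithmetic in `ZMod (p^2)` -/

section ScalarAux
variable (p : ℕ) [Fact p.Prime]

/-- cast of `val` into `ZMod (p^2)` -/
noncomputable def psiA (t : ZMod p) : ZMod (p^2) := (t.val : ZMod (p^2))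

omit [Fact p.Prime] in
lemma pp_zero : (p : ZMod (p^2)) * p = 0 := by
  have : ((p * p : ℕ) : ZMod (p^2)) = 0 := by
    rw [← pow_two]; exact ZMod.natCast_self _
  push_cast at this; exact this

lemma psiA_zero : psiA p (0 : ZMod p) = 0 := by
  haveI : NeZero p := ⟨(Fact.out : p.Prime).ne_zero⟩
  unfold psiA
  rw [ZMod.val_zero, Nat.cast_zero]

lemma psiA_add (s t : ZMod p) :
    psiA p s + psiA p t = psiA p (s + t) + (p : ZMod (p^2)) * ((s.val + t.val) / p : ℕ) := by
  haveI : NeZero p := ⟨(Fact.out : p.Prime).ne_zero⟩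
  have h : s.val + t.val = (s + t).val + p * ((s.val + t.val) / p) := by
    rw [ZMod.val_add]; exact (Nat.mod_add_div _ _).symm
  have h2 := congrArg (fun m : ℕ => (m : ZMod (p^2))) h
  push_cast at h2
  unfold psiA; exact h2

lemma phi_add (a b : ZMod p) :
    (p : ZMod (p^2)) * psiA p (a + b) = (p : ZMod (p^2)) * psiA p a + (p : ZMod (p^2)) * psiA p b := by
  have h1 := psiA_add p a b
  have h2 := pp_zero p
  linear_combination (-(p : ZMod (p^2))) * h1 - (((a.val + b.val)/p : ℕ) : ZMod (p^2)) * h2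

lemma phi_mul (a b : ZMod p) :
    (p : ZMod (p^2)) * psiA p (a * b) = psiA p a * ((p : ZMod (p^2)) * psiA p b) := by
  haveI : NeZero p := ⟨(Fact.out : p.Prime).ne_zero⟩
  have h : a.val * b.val = (a * b).val + p * ((a.val * b.val) / p) := by
    rw [ZMod.val_mul]; exact (Nat.mod_add_div _ _).symm
  have h2 := congrArg (fun m : ℕ => (m : ZMod (p^2))) h
  push_cast at h2
  have h3 := pp_zero p
  unfold psiA
  linear_combination (-(p : ZMod (p^2))) * h2 - (((a.val * b.val)/p : ℕ) : ZMod (p^2)) * h3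

lemma psiA_cross (s t : ZMod p) (z : ZMod (p^2)) :
    psiA p (s + t) * ((p : ZMod (p^2)) * z) = (psiA p s + psiA p t) * ((p : ZMod (p^2)) * z) := by
  have h1 := psiA_add p s t
  have h2 := pp_zero p
  linear_combination (-((p : ZMod (p^2)) * z)) * h1 - ((((s.val + t.val)/p : ℕ) : ZMod (p^2)) * z) * h2

/-- "one half of p", used for the quadratic correction term -/
noncomputable def mbar : ZMod (p^2) := ((p * (p + 1) / 2 : ℕ) : ZMod (p^2))

omit [Fact p.Prime] in
lemma two_mbar : 2 * mbar p = (p : ZMod (p^2)) := by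
  have h : 2 * (p * (p + 1) / 2) = p + p * p := by
    rw [Nat.two_mul_div_two_of_even (Nat.even_mul_succ_self p)]; ring
  have h2 := congrArg (fun m : ℕ => (m : ZMod (p^2))) h
  push_cast at h2
  unfold mbar
  linear_combination h2 + pp_zero p

/-- diagonal quadratic lemma -/
lemma psiA_diag (c s t : ZMod p) :
    psiA p (s + t)^2 * (mbar p * psiA p c)
      = psiA p s^2 * (mbar p * psiA p c) + psiA p t^2 * (mbar p * psiA p c)
        + psiA p s * psiA p t * ((p : ZMod (p^2)) * psiA p c) := by
  have h1 := psiA_add p s t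
  have h2 := pp_zero p
  have h3 := two_mbar p
  set u := psiA p (s + t) with hu
  set S := psiA p s
  set T := psiA p t
  set C := psiA p c
  set k : ZMod (p^2) := (((s.val + t.val)/p : ℕ) : ZMod (p^2)) with hk
  linear_combination (S*T*C - (p:ZMod (p^2))*k*(S+T)*C) * h3
    + (k^2*(mbar p)*C - k*(S+T)*C) * h2
    - ((u+S+T-(p:ZMod (p^2))*k)*(mbar p)*C) * h1

lemma cross2 (s1 t1 s2 t2 cB : ZMod p) :
    psiA p (s1 + t1) * psiA p (s2 + t2) * ((p : ZMod (p^2)) * psiA p cB)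
      = (psiA p s1 + psiA p t1) * (psiA p s2 + psiA p t2) * ((p : ZMod (p^2)) * psiA p cB) := by
  have h1 := psiA_cross p s1 t1 (psiA p (s2 + t2) * psiA p cB)
  have h2 := psiA_cross p s2 t2 ((psiA p s1 + psiA p t1) * psiA p cB)
  linear_combination h1 + h2

end ScalarAux

/-! ### Existence of a quadratic refinement -/

lemma quad_lift (p : ℕ) [Fact p.Prime] {M : Type*} [AddCommGroup M] [Module (ZMod p) M]
    [Finite M] (β : M → M → ZMod p)
    (hl : ∀ x y z, β (x + y) z = β x z + β y z)
    (hr : ∀ x y z, β x (y + z) = β x y + β x z)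
    (hs : ∀ x y, β x y = β y x) :
    ∃ q : M → ZMod (p^2), q 0 = 0 ∧
      ∀ x y, q (x + y) = q x + q y + (p : ZMod (p^2)) * psiA p (β x y) := by
  classical
  let b := Module.finBasis (ZMod p) M
  set ι := Fin (Module.finrank (ZMod p) M) with hι
  let r : M → ι → ZMod p := fun x i => b.repr x i
  have hradd : ∀ x y (i : ι), r (x + y) i = r x i + r y i := by
    intro x y i; simp [r]
  have hsmul_l : ∀ (c : ZMod p) (v w : M), β (c • v) w = c * β v w := by
    intro c v w
    let F : M →+ ZMod p := AddMonoidHom.mk' (fun x => β x w) (fun a b => hl a b w)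
    have hcv : c • v = c.val • v := by
      conv_lhs => rw [show c = ((c.val : ℕ) : ZMod p) by simp [ZMod.natCast_val, ZMod.cast_id]]
      rw [Nat.cast_smul_eq_nsmul]
    have : F (c • v) = c.val • F v := by rw [hcv, map_nsmul]
    simpa [F, nsmul_eq_mul, ZMod.natCast_val, ZMod.cast_id] using this
  have hsmul_r : ∀ (c : ZMod p) (v w : M), β v (c • w) = c * β v w := by
    intro c v w; rw [hs, hsmul_l, hs]
  have hexp : ∀ x y, β x y = ∑ i, ∑ j, r x i * (r y j * β (b i) (b j)) := by
    intro x y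
    conv_lhs => rw [← b.sum_repr x]
    let F : M →+ ZMod p := AddMonoidHom.mk' (fun v => β v y) (fun a c => hl a c y)
    have hF : β (∑ i, b.repr x i • b i) y = F (∑ i, b.repr x i • b i) := rfl
    rw [hF, map_sum]
    refine Finset.sum_congr rfl fun i _ => ?_
    have h1 : F (b.repr x i • b i) = r x i * β (b i) y := hsmul_l _ _ _
    rw [h1]
    conv_lhs => rw [← b.sum_repr y]
    let G : M →+ ZMod p := AddMonoidHom.mk' (fun w => β (b i) w) (fun a c => hr (b i) a c)
    have h2 : β (b i) (∑ j, b.repr y j • b j) = G (∑ j, b.repr y j • b j) := rfl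
    rw [h2, map_sum, Finset.mul_sum]
    refine Finset.sum_congr rfl fun j _ => ?_
    exact congrArg _ (hsmul_r _ _ _)
  -- the quadratic function
  set P : ZMod (p^2) := (p : ZMod (p^2)) with hP
  let μ : ι → ZMod (p^2) := fun i => mbar p * psiA p (β (b i) (b i))
  let φ : ι → ι → ZMod (p^2) := fun i j => P * psiA p (β (b i) (b j))
  let q : M → ZMod (p^2) := fun x =>
    (∑ i, psiA p (r x i)^2 * μ i)
    + ∑ i, ∑ j, if i < j then psiA p (r x i) * psiA p (r x j) * φ i j else 0
  have hφsymm : ∀ i j, φ i j = φ j i := fun i j => by simp only [φ, hs]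
  refine ⟨q, ?_, ?_⟩
  · have hr0 : ∀ i : ι, r 0 i = 0 := by intro i; simp [r]
    simp [q, hr0, psiA_zero]
  intro x y
  let S : ι → ZMod (p^2) := fun i => psiA p (r x i)
  let T : ι → ZMod (p^2) := fun i => psiA p (r y i)
  let f : ι → ι → ZMod (p^2) := fun i j => S i * T j * φ i j
  -- Step 1: rewrite the correction term
  have hPhi : P * psiA p (β x y) = ∑ i, ∑ j, f i j := by
    let Φ : ZMod p →+ ZMod (p^2) := AddMonoidHom.mk' (fun c => P * psiA p c) (phi_add p)
    have h0 : P * psiA p (β x y) = Φ (∑ i, ∑ j, r x i * (r y j * β (b i) (b j))) := by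
      rw [← hexp]; rfl
    rw [h0, map_sum]
    refine Finset.sum_congr rfl fun i _ => ?_
    rw [map_sum]
    refine Finset.sum_congr rfl fun j _ => ?_
    show P * psiA p (r x i * (r y j * β (b i) (b j))) = f i j
    rw [phi_mul, phi_mul]
    show S i * (T j * φ i j) = S i * T j * φ i j
    ring
  -- Step 2: diagonal sums
  have hdiag : (∑ i, psiA p (r (x+y) i)^2 * μ i)
      = (∑ i, S i^2 * μ i) + (∑ i, T i^2 * μ i) + ∑ i, f i i := by
    rw [← Finset.sum_add_distrib, ← Finset.sum_add_distrib]
    refine Finset.sum_congr rfl fun i _ => ?_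
    rw [hradd]
    exact psiA_diag p _ _ _
  -- Step 3: cross sums
  have hcrossterm : ∀ i j : ι, (if i < j then psiA p (r (x+y) i) * psiA p (r (x+y) j) * φ i j else 0)
      = (if i < j then S i * S j * φ i j else 0) + (if i < j then T i * T j * φ i j else 0)
        + ((if i < j then f i j else 0) + (if i < j then f j i else 0)) := by
    intro i j
    split
    · rw [hradd, hradd]
      have h2 := cross2 p (r x i) (r y i) (r x j) (r y j) (β (b i) (b j))
      have h3 := hφsymm i j
      show psiA p (r x i + r y i) * psiA p (r x j + r y j) * φ i j
        = S i * S j * φ i j + T i * T j * φ i j + (S i * T j * φ i j + S j * T i * φ j i)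
      linear_combination h2 + S j * T i * h3
    · simp
  have hcross : (∑ i, ∑ j, if i < j then psiA p (r (x+y) i) * psiA p (r (x+y) j) * φ i j else 0)
      = (∑ i, ∑ j, if i < j then S i * S j * φ i j else 0)
        + (∑ i, ∑ j, if i < j then T i * T j * φ i j else 0)
        + ((∑ i, ∑ j, if i < j then f i j else 0) + (∑ i, ∑ j, if i < j then f j i else 0)) := by
    simp_rw [hcrossterm, Finset.sum_add_distrib]
  -- Step 4: combinatorial identity
  have htri : ∀ i j : ι, f i j = (if i < j then f i j else 0) + (if j < i then f i j else 0)
      + (if i = j then f i j else 0) := by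
    intro i j
    rcases lt_trichotomy i j with h|h|h
    · simp [h, asymm h, ne_of_lt h]
    · subst h; rw [if_neg (lt_irrefl i), if_pos rfl, zero_add, zero_add]
    · simp [h, asymm h, (ne_of_gt h)]
  have hswap : (∑ i, ∑ j, if j < i then f i j else 0) = ∑ i, ∑ j, if i < j then f j i else 0 :=
    Finset.sum_comm
  have hdiagsum : (∑ i : ι, ∑ j, if i = j then f i j else 0) = ∑ i, f i i := by
    refine Finset.sum_congr rfl fun i _ => ?_
    rw [Finset.sum_eq_single i (fun j _ hj => if_neg (Ne.symm hj))
      (fun h => absurd (Finset.mem_univ _) h), if_pos rfl]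
  have hcomb : (∑ i, ∑ j, f i j)
      = (∑ i, ∑ j, if i < j then f i j else 0) + (∑ i, ∑ j, if i < j then f j i else 0)
        + ∑ i, f i i := by
    rw [← hdiagsum, ← hswap]
    simp_rw [← Finset.sum_add_distrib]
    exact Finset.sum_congr rfl fun i _ => Finset.sum_congr rfl fun j _ => htri i j
  -- assemble
  show (∑ i, psiA p (r (x+y) i)^2 * μ i)
      + (∑ i, ∑ j, if i < j then psiA p (r (x+y) i) * psiA p (r (x+y) j) * φ i j else 0)
    = ((∑ i, S i^2 * μ i) + ∑ i, ∑ j, if i < j then S i * S j * φ i j else 0)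
      + ((∑ i, T i^2 * μ i) + ∑ i, ∑ j, if i < j then T i * T j * φ i j else 0)
      + P * psiA p (β x y)
  rw [hdiag, hcross, hPhi, hcomb]
  ring

/-! ### Properties of `omg` -/

lemma omg_ne_zero (N : ℕ) : omg N ≠ 0 := Complex.exp_ne_zero _

lemma omg_pow_self (N : ℕ) (hN : N ≠ 0) : omg N ^ N = 1 := by
  have hNc : (N : ℂ) ≠ 0 := Nat.cast_ne_zero.mpr hN
  rw [omg, ← Complex.exp_nat_mul]
  rw [mul_div_assoc', mul_comm, mul_div_assoc, div_self hNc, mul_one, Complex.exp_two_pi_mul_I]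

lemma omg_val_add (N : ℕ) [NeZero N] (a b : ZMod N) :
    omg N ^ (a + b).val = omg N ^ a.val * omg N ^ b.val := by
  have h : a.val + b.val = (a + b).val + N * ((a.val + b.val) / N) := by
    rw [ZMod.val_add]; exact (Nat.mod_add_div _ _).symm
  rw [← pow_add, h, pow_add, pow_mul, omg_pow_self N (NeZero.ne N), one_pow, mul_one]

lemma omg_pow_p (p : ℕ) (hp : p ≠ 0) : omg (p^2) ^ p = omg p := by
  rw [omg, omg, ← Complex.exp_nat_mul]
  congr 1
  have h2 : ((p^2 : ℕ) : ℂ) = (p : ℂ)^2 := by push_cast; ring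
  rw [h2]
  have : (p : ℂ) ≠ 0 := Nat.cast_ne_zero.mpr hp
  field_simp

lemma omg_eq_one_iff (N : ℕ) (hN : N ≠ 0) (m : ℕ) (hm : m < N) (h : omg N ^ m = 1) : m = 0 := by
  rw [omg, ← Complex.exp_nat_mul, Complex.exp_eq_one_iff] at h
  obtain ⟨k, hk⟩ := h
  have hNc : (N : ℂ) ≠ 0 := Nat.cast_ne_zero.mpr hN
  have hpi : (2 * (Real.pi:ℂ) * Complex.I) ≠ 0 := by
    simp [Complex.I_ne_zero, Real.pi_ne_zero, Complex.ofReal_ne_zero]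
  have hmk : (m : ℂ) = (k : ℂ) * N := by
    have h2 : (m:ℂ) * (2 * (Real.pi:ℂ) * Complex.I) = ((k:ℂ)*N) * (2 * (Real.pi:ℂ) * Complex.I) := by
      field_simp at hk
      linear_combination (2 * (Real.pi:ℂ) * Complex.I) * hk
    exact mul_right_cancel₀ hpi h2
  have hmk' : (m : ℤ) = k * N := by exact_mod_cast hmk
  have hdvd : N ∣ m := by
    have : (N:ℤ) ∣ (m:ℤ) := ⟨k, by linarith⟩
    exact_mod_cast this
  exact Nat.eq_zero_of_dvd_of_lt hdvd hm

/-- `omg (p^2) ^ (p * ψ β).val = omg p ^ β.val`. -/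
lemma omg_phi (p : ℕ) [Fact p.Prime] (c : ZMod p) :
    omg (p^2) ^ (((p : ZMod (p^2)) * psiA p c).val) = omg p ^ c.val := by
  haveI : NeZero p := ⟨(Fact.out : p.Prime).ne_zero⟩
  haveI : NeZero (p^2) := ⟨pow_ne_zero 2 (NeZero.ne p)⟩
  have h1 : (p : ZMod (p^2)) * psiA p c = ((p * c.val : ℕ) : ZMod (p^2)) := by
    unfold psiA; push_cast; ring
  have hlt : p * c.val < p^2 := by
    have := ZMod.val_lt c
    calc p * c.val < p * p :=
          mul_lt_mul_of_pos_left this (Nat.pos_of_ne_zero (NeZero.ne p))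
      _ = p^2 := (pow_two p).symm
  rw [h1, ZMod.val_natCast, Nat.mod_eq_of_lt hlt, pow_mul, omg_pow_p p (NeZero.ne p)]

/-! ### Properties of `ip` and `Wt` -/

section IP
variable (p : ℕ) [Fact p.Prime] {K : Type*} [Field K] [Fintype K] [DecidableEq K]
    [Algebra (ZMod p) K] {n : ℕ}

lemma ip_add_left (x y z : Fin n → K) : ip p (x + y) z = ip p x z + ip p y z := by
  unfold ip
  rw [← map_add]
  congr 1
  rw [← Finset.sum_add_distrib]
  exact Finset.sum_congr rfl fun s _ => by simp [add_mul]

lemma ip_add_right (x y z : Fin n → K) : ip p x (y + z) = ip p x y + ip p x z := by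
  unfold ip
  rw [← map_add]
  congr 1
  rw [← Finset.sum_add_distrib]
  exact Finset.sum_congr rfl fun s _ => by simp [mul_add]

lemma ip_comm (x y : Fin n → K) : ip p x y = ip p y x := by
  unfold ip; congr 1; exact Finset.sum_congr rfl fun s _ => mul_comm _ _

lemma ip_zero_right (x : Fin n → K) : ip p x 0 = 0 := by
  unfold ip; simp

lemma ip_zero_left (x : Fin n → K) : ip p 0 x = 0 := by
  unfold ip; simp

lemma Wt_mul (a b a' b' : Fin n → K) :
    Wt p a b * Wt p a' b' = (omg p ^ (ip p b a').val) • Wt p (a + a') (b + b') := by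
  haveI : NeZero p := ⟨(Fact.out : p.Prime).ne_zero⟩
  ext j k
  rw [Matrix.mul_apply]
  rw [Finset.sum_eq_single (k + a')]
  · simp only [Wt, Matrix.of_apply, Matrix.smul_apply, smul_eq_mul]
    have hiff : j = k + a' + a ↔ j = k + (a + a') := by
      constructor <;> intro h <;> rw [h, add_assoc, add_comm a a']
    by_cases h : j = k + a' + a
    · rw [if_pos h, if_pos (hiff.mp h)]
      simp only [if_true]
      rw [ip_add_right, omg_val_add, ip_add_left, omg_val_add]
      ring
    · rw [if_neg h, if_neg (fun hc => h (hiff.mpr hc)), zero_mul, mul_zero]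
  · intro m _ hm
    simp only [Wt, Matrix.of_apply]
    rw [if_neg hm, mul_zero]
  · intro h; exact absurd (Finset.mem_univ _) h

lemma Wt_zero : Wt p (0 : Fin n → K) 0 = 1 := by
  ext j k
  simp only [Wt, Matrix.of_apply, Matrix.one_apply, add_zero, ip_zero_left]
  by_cases h : j = k <;> simp [h, ZMod.val_zero]

end IP

/-- Proposition 1 of the paper: if `V ⊆ F_q^{2n}` is a self-orthogonal
subspace (`⟨v, Jv'⟩ = 0` for all `v, v' ∈ V`), then there is a function `c : V → ℂ`
with `c 0 = 1` such that `W(v) := c(v) • W̃(v)` satisfies `W(v) W(v') = W(v+v')` on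
`V`; consequently `{W(v) : v ∈ V}` is a commutative group of matrices in which the
identity matrix is the only scalar multiple of the identity. -/
theorem stmt_11 (p : ℕ) [Fact p.Prime] (K : Type*) [Field K] [Fintype K] [DecidableEq K]
    [Algebra (ZMod p) K] (n : ℕ)
    (V : Submodule K ((Fin n → K) × (Fin n → K)))
    (hV : ∀ v ∈ V, ∀ v' ∈ V, symp p v v' = 0) :
    ∃ c : ((Fin n → K) × (Fin n → K)) → ℂ,
      c 0 = 1 ∧
      (∀ v ∈ V, ∀ v' ∈ V,
        (c v • Wtv p v) * (c v' • Wtv p v') = c (v + v') • Wtv p (v + v')) ∧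
      (∀ v ∈ V, ∀ v' ∈ V,
        (c v • Wtv p v) * (c v' • Wtv p v') = (c v' • Wtv p v') * (c v • Wtv p v)) ∧
      (∀ v ∈ V, ∀ z : ℂ,
        c v • Wtv p v = z • (1 : Matrix (Fin n → K) (Fin n → K) ℂ) →
          c v • Wtv p v = 1) := by
  classical
  haveI : NeZero p := ⟨(Fact.out : p.Prime).ne_zero⟩
  haveI : NeZero (p^2) := ⟨pow_ne_zero 2 (NeZero.ne p)⟩
  set Amb := ((Fin n → K) × (Fin n → K)) with hAmb
  let VM := Submodule.restrictScalars (ZMod p) V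
  let M := ↥VM
  let β : M → M → ZMod p := fun u w => ip p (u : Amb).2 (w : Amb).1
  have hmem : ∀ u : M, (u : Amb) ∈ V := fun u => u.2
  have hl : ∀ x y z : M, β (x + y) z = β x z + β y z := by
    intro x y z
    show ip p ((x + y : M) : Amb).2 _ = _
    rw [Submodule.coe_add, Prod.snd_add, ip_add_left]
  have hr : ∀ x y z : M, β x (y + z) = β x y + β x z := by
    intro x y z
    show ip p _ ((y + z : M) : Amb).1 = _
    rw [Submodule.coe_add, Prod.fst_add, ip_add_right]
  have hsymm : ∀ x y : M, β x y = β y x := by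
    intro x y
    have h1 := hV (x : Amb) (hmem x) (y : Amb) (hmem y)
    have h2 : ip p (x : Amb).2 (y : Amb).1 = ip p (x : Amb).1 (y : Amb).2 :=
      sub_eq_zero.mp h1
    show ip p (x : Amb).2 (y : Amb).1 = ip p (y : Amb).2 (x : Amb).1
    rw [h2, ip_comm]
  obtain ⟨q, hq0, hqadd⟩ := quad_lift p β hl hr hsymm
  -- the phase function
  let c : Amb → ℂ := fun v => if h : v ∈ V then omg (p^2) ^ (q ⟨v, h⟩).val else 1
  have hcmem : ∀ (v : Amb) (hv : v ∈ V), c v = omg (p^2) ^ (q ⟨v, hv⟩).val := by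
    intro v hv; simp only [c, dif_pos hv]
  have hc0 : c 0 = 1 := by
    rw [hcmem 0 (zero_mem V)]
    have : (⟨(0 : Amb), zero_mem V⟩ : M) = 0 := rfl
    rw [this, hq0, ZMod.val_zero, pow_zero]
  have hcne : ∀ v : Amb, c v ≠ 0 := by
    intro v
    by_cases h : v ∈ V
    · rw [hcmem v h]; exact pow_ne_zero _ (omg_ne_zero _)
    · simp only [c, dif_neg h]; exact one_ne_zero
  -- the key cocycle identity
  have hkey : ∀ (v : Amb) (hv : v ∈ V) (w : Amb) (hw : w ∈ V),
      c v * c w * omg p ^ (ip p v.2 w.1).val = c (v + w) := by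
    intro v hv w hw
    have hvw : v + w ∈ V := add_mem hv hw
    rw [hcmem v hv, hcmem w hw, hcmem (v + w) hvw]
    have hmk : (⟨v + w, hvw⟩ : M) = ⟨v, hv⟩ + ⟨w, hw⟩ := rfl
    rw [hmk, hqadd ⟨v, hv⟩ ⟨w, hw⟩]
    have hβ : β ⟨v, hv⟩ ⟨w, hw⟩ = ip p v.2 w.1 := rfl
    rw [omg_val_add, omg_val_add, hβ, omg_phi]
  -- multiplication law for the unnormalized operators
  have hWtv_mul : ∀ v w : Amb,
      Wtv p v * Wtv p w = (omg p ^ (ip p v.2 w.1).val) • Wtv p (v + w) := by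
    intro v w
    show Wt p v.1 v.2 * Wt p w.1 w.2 = (omg p ^ (ip p v.2 w.1).val) • Wt p (v + w).1 (v + w).2
    rw [Prod.fst_add, Prod.snd_add]
    exact Wt_mul p v.1 v.2 w.1 w.2
  -- the group law
  have hgrp : ∀ v ∈ V, ∀ w ∈ V,
      (c v • Wtv p v) * (c w • Wtv p w) = c (v + w) • Wtv p (v + w) := by
    intro v hv w hw
    calc (c v • Wtv p v) * (c w • Wtv p w)
        = (c v * c w) • (Wtv p v * Wtv p w) := by
          rw [Matrix.smul_mul, Matrix.mul_smul, smul_smul]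
      _ = (c v * c w) • ((omg p ^ (ip p v.2 w.1).val) • Wtv p (v + w)) := by
          rw [hWtv_mul]
      _ = (c v * c w * omg p ^ (ip p v.2 w.1).val) • Wtv p (v + w) := by
          rw [smul_smul]
      _ = c (v + w) • Wtv p (v + w) := by rw [hkey v hv w hw]
  refine ⟨c, hc0, hgrp, ?_, ?_⟩
  · intro v hv w hw
    rw [hgrp v hv w hw, hgrp w hw v hv, add_comm]
  · intro v hv z hz
    by_cases h1 : v.1 = 0
    · -- diagonal entries
      have hdiagvals : ∀ k : Fin n → K, c v * omg p ^ (ip p v.2 k).val = z := by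
        intro k
        have hent := congrFun (congrFun (congrArg (fun Mx => (Mx : Matrix _ _ ℂ)) hz) k) k
        simp only [Matrix.smul_apply, smul_eq_mul, Matrix.one_apply_eq, mul_one] at hent
        have hWtvk : Wtv p v k k = omg p ^ (ip p v.2 k).val := by
          show Wt p v.1 v.2 k k = _
          simp only [Wt, Matrix.of_apply]
          rw [if_pos (by rw [h1, add_zero])]
        rw [hWtvk] at hent
        exact hent
      have hz_eq : z = c v := by
        have := hdiagvals 0
        rw [ip_zero_right, ZMod.val_zero, pow_zero, mul_one] at this
        exact this.symm
      have hone : ∀ k : Fin n → K, omg p ^ (ip p v.2 k).val = 1 := by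
        intro k
        have h := hdiagvals k
        rw [hz_eq] at h
        exact mul_left_cancel₀ (hcne v) (h.trans (mul_one (c v)).symm)
      have hipzero : ∀ k : Fin n → K, ip p v.2 k = 0 := by
        intro k
        have := omg_eq_one_iff p (NeZero.ne p) _ (ZMod.val_lt _) (hone k)
        exact (ZMod.val_eq_zero _).mp this
      -- nondegeneracy of the trace pairing
      haveI : Algebra.IsAlgebraic (ZMod p) K := Algebra.IsAlgebraic.of_finite _ _
      have hnd := traceForm_nondegenerate (ZMod p) K
      have hb : v.2 = 0 := by
        funext s
        show v.2 s = (0 : K)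
        refine hnd.1 _ fun y => ?_
        have h := hipzero (fun t => if t = s then y else 0)
        rw [Algebra.traceForm_apply]
        unfold ip at h
        simpa [mul_ite, mul_zero, Finset.sum_ite_eq'] using h
      have hv0 : v = 0 := Prod.ext h1 hb
      rw [hv0, hc0, one_smul]
      show Wt p (0 : Fin n → K) 0 = 1
      exact Wt_zero p
    · -- off-diagonal: contradiction
      exfalso
      have hent := congrFun (congrFun (congrArg (fun Mx => (Mx : Matrix _ _ ℂ)) hz) v.1) 0
      simp only [Matrix.smul_apply, smul_eq_mul] at hent
      have hWtve : Wtv p v v.1 0 = omg p ^ (ip p v.2 0).val := by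
        show Wt p v.1 v.2 v.1 0 = _
        simp only [Wt, Matrix.of_apply]
        rw [if_pos (by rw [zero_add])]
      rw [hWtve, ip_zero_right, ZMod.val_zero, pow_zero, mul_one,
        Matrix.one_apply_ne h1, mul_zero] at hent
      exact hcne v hent
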